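/- If removing a pending invocation inv(c) from a trace t₁ ++ [inv(c)] ++ t₂ yields a trace (i.e., inv(c) has no matching response or effect), and the partial order <_{P_M} allows the original trace, then <_{P_M} allows the resulting trace t₁ ++ t₂, under the axiom relating enforced orderings of invocations and responses. -/

import Mathlib

inductive Event (T PS Op Val : Type) : Type
  | step : T → PS → Event T PS Op Val
  | effS : T → PS → Event T PS Op Val
  | inv  : Op → Val → Event T PS Op Val
  | res  : Op → Val → Event T PS Op Val
  | effO : Op → Val → Event T PS Op Val

namespace Event

variable {T PS Op Val : Type}

/-- `precedes t a b`: `a` occurs at an earlier index than `b` in the trace `t`. -/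
def precedes (t : List (Event T PS Op Val)) (a b : Event T PS Op Val) : Prop :=
  ∃ i j, i < j ∧ t[(i : ℕ)]? = some a ∧ t[(j : ℕ)]? = some b

/-- Program events: program steps and their effects. -/
def IsProgEvent : Event T PS Op Val → Prop
  | step _ _ => True
  | effS _ _ => True
  | _ => False

/-- Invocation or response event. -/
def isIR : Event T PS Op Val → Bool
  | inv _ _ => true
  | res _ _ => true
  | _ => false

/-- Restriction of a trace to its invocation and response events. -/
def restrictIR (t : List (Event T PS Op Val)) : List (Event T PS Op Val) := t.filter isIR

/-- Well-formedness of traces: invocations precede matching responses and effects,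
program steps precede their effects, and response/effect outputs agree. -/
def WellFormed (t : List (Event T PS Op Val)) : Prop :=
  (∀ j a out, (t[(j : ℕ)]? = some (res a out) ∨ t[(j : ℕ)]? = some (effO a out)) →
      ∃ i inp, i < j ∧ t[(i : ℕ)]? = some (inv a inp)) ∧
  (∀ j τ p, t[(j : ℕ)]? = some (effS τ p) → ∃ i, i < j ∧ t[(i : ℕ)]? = some (step τ p)) ∧
  (∀ a outr oute, res a outr ∈ t → effO a oute ∈ t → outr = oute)

/-- `ext t`: the extensions of trace `t` by a sequence of response events. -/
def ext (t : List (Event T PS Op Val)) : Set (List (Event T PS Op Val)) :=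
  {u | ∃ tr, u = t ++ tr ∧ (∀ e ∈ tr, ∃ c v, e = res c v) ∧ u.Nodup}

open Classical in
/-- `comp t` removes from `t` every invocation with neither a later response
nor a later operation effect. -/
noncomputable def comp : List (Event T PS Op Val) → List (Event T PS Op Val)
  | [] => []
  | e :: rest =>
    if ∃ a inp, e = inv a inp ∧ ∀ out, res a out ∉ rest ∧ effO a out ∉ rest
    then comp rest
    else e :: comp rest

/-- `Allows R t` : the (partial) order `R` allows the trace `t`. -/
def Allows (R : Event T PS Op Val → Event T PS Op Val → Prop)
    (t : List (Event T PS Op Val)) : Prop :=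
  ∀ a b, R a b → b ∈ t → precedes t a b

/-- The operation order `⪯_t`: pairs `(res c, inv d)` with the response before
the invocation in `t`. -/
def OpOrd (t : List (Event T PS Op Val)) (e e' : Event T PS Op Val) : Prop :=
  (∃ c v, e = res c v) ∧ (∃ d w, e' = inv d w) ∧ precedes t e e'

/-- Atomic history: every invocation is immediately followed by its response and
every response immediately preceded by its invocation. -/
def Atomic (h : List (Event T PS Op Val)) : Prop :=
  (∀ i a inp, h[(i : ℕ)]? = some (inv a inp) → ∃ out, h[(i + 1 : ℕ)]? = some (res a out)) ∧
  (∀ i a out, h[(i : ℕ)]? = some (res a out) → ∃ j inp, i = j + 1 ∧ h[(j : ℕ)]? = some (inv a inp))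

/-- The thread of an object event (invocation or response), if any. -/
def objThread (thread : Op → T) : Event T PS Op Val → Option T
  | inv o _ => some (thread o)
  | res o _ => some (thread o)
  | _ => none

/-- Thread equivalence: equal per-thread subsequences of invocations and responses. -/
def threadEquiv [DecidableEq T] (thread : Op → T) (t h : List (Event T PS Op Val)) : Prop :=
  ∀ τ : T, t.filter (fun e => decide (objThread thread e = some τ)) =
           h.filter (fun e => decide (objThread thread e = some τ))

open Classical in
/-- The transformation function `trans` of the soundness proof (cases (T1)–(T5)). -/
noncomputable def trans : List (Event T PS Op Val) → List (Event T PS Op Val) →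
    List (Event T PS Op Val) → List (Event T PS Op Val)
  | t, h', r =>
    if h5 : ∃ a inp out, h'.head? = some (inv a inp) ∧ inv a inp ∈ r ∧ res a out ∈ t then
      -- (T5)
      let a := h5.choose
      let inp := h5.choose_spec.choose
      let out := h5.choose_spec.choose_spec.choose
      inv a inp :: effO a out :: res a out ::
        trans t h'.tail.tail (r.eraseP (fun e => decide (e = inv a inp)))
    else
      match t with
      | [] => []
      | .inv a inp :: ts =>
          if h1 : h'.head? = some (inv a inp) ∧ ∃ out, res a out ∈ (inv a inp :: ts) then
            -- (T1)
            inv a inp :: effO a h1.2.choose :: res a h1.2.choose ::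
              trans ts h'.tail.tail r
          else
            -- (T2)
            trans ts h' (r ++ [inv a inp])
      | .res _ _ :: ts => trans ts h' r        -- (T3)
      | .effO _ _ :: ts => trans ts h' r       -- (T3)
      | .step s p :: ts => step s p :: trans ts h' r   -- (T4)
      | .effS s p :: ts => effS s p :: trans ts h' r   -- (T4)
  termination_by t h' r => t.length + h'.length
  decreasing_by
    · obtain ⟨a, inp, out, hh, -, -⟩ := h5
      have hne : h' ≠ [] := by intro hcon; subst hcon; simp at hh
      have h0 : 0 < h'.length := List.length_pos_iff.mpr hne
      simp_wf
      omega
    all_goals simp_wf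
    all_goals omega

/-- Atomic-style traces: blocks `[inv a in, eff a out, res a out]` interleaved with
program events, each operation appearing in exactly one block. -/
inductive AtomicStyle : List (Event T PS Op Val) → Prop
  | nil : AtomicStyle []
  | prog {e : Event T PS Op Val} {t : List (Event T PS Op Val)} :
      IsProgEvent e → AtomicStyle t → AtomicStyle (e :: t)
  | block {a : Op} {inp out : Val} {t : List (Event T PS Op Val)} :
      (∀ v : Val, inv a v ∉ t ∧ res a v ∉ t ∧ effO a v ∉ t) →
      AtomicStyle t →
      AtomicStyle (inv a inp :: effO a out :: res a out :: t)

end Event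

/-- Removing a pending invocation (one with no matching response or
effect) from a trace allowed by `R` yields a trace allowed by `R`, under the axiom
relating enforced orderings of invocations and responses. -/
theorem stmt3 {T PS Op Val : Type}
    (R : Event T PS Op Val → Event T PS Op Val → Prop)
    (hAx : ∀ (a : Op) (inp out : Val) (e : Event T PS Op Val),
      e ≠ Event.effO a out → (R (Event.inv a inp) e ↔ R (Event.res a out) e))
    (t₁ t₂ : List (Event T PS Op Val)) (c : Op) (cin : Val)
    (hnd : (t₁ ++ Event.inv c cin :: t₂).Nodup)
    (hwf : Event.WellFormed (t₁ ++ Event.inv c cin :: t₂))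
    (hpend : ∀ out : Val, Event.res c out ∉ t₁ ++ t₂ ∧ Event.effO c out ∉ t₁ ++ t₂)
    (hall : Event.Allows R (t₁ ++ Event.inv c cin :: t₂)) :
    Event.Allows R (t₁ ++ t₂) := by
  -- index lemma: locating an element ≠ inv c cin in the shortened trace
  have hget : ∀ (k : ℕ) (x : Event T PS Op Val), x ≠ Event.inv c cin →
      (t₁ ++ Event.inv c cin :: t₂)[k]? = some x →
      (t₁ ++ t₂)[(if k < t₁.length then k else k - 1)]? = some x ∧ k ≠ t₁.length := by
    intro k x hx h
    by_cases hk : k < t₁.length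
    · simp only [hk, if_true]
      rw [List.getElem?_append_left hk] at h
      rw [List.getElem?_append_left hk]
      exact ⟨h, by omega⟩
    · have hk' : k ≠ t₁.length := by
        intro hkn
        rw [hkn, List.getElem?_append_right (le_refl _)] at h
        simp at h
        exact hx h.symm
      have hk2 : t₁.length < k := by omega
      rw [List.getElem?_append_right (by omega)] at h
      have : (Event.inv c cin :: t₂)[k - t₁.length]? = t₂[k - t₁.length - 1]? := by
        have : k - t₁.length = (k - t₁.length - 1) + 1 := by omega
        rw [this, List.getElem?_cons_succ]; simp
      rw [this] at h
      simp only [hk, if_false]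
      rw [List.getElem?_append_right (by omega)]
      constructor
      · have : k - 1 - t₁.length = k - t₁.length - 1 := by omega
        rw [this]; exact h
      · exact hk'
  have hinvnotin : Event.inv c cin ∉ t₁ ++ t₂ := by
    rw [List.nodup_append] at hnd
    intro hmem
    rcases List.mem_append.mp hmem with h | h
    · exact hnd.2.2 _ h _ List.mem_cons_self rfl
    · exact (List.nodup_cons.mp hnd.2.1).1 h
  intro a b hab hb
  have hb' : b ∈ t₁ ++ Event.inv c cin :: t₂ := by
    rcases List.mem_append.mp hb with h | h
    · exact List.mem_append.mpr (Or.inl h)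
    · exact List.mem_append.mpr (Or.inr (List.mem_cons_of_mem _ h))
  have hbne : b ≠ Event.inv c cin := fun h => hinvnotin (h ▸ hb)
  by_cases ha : a = Event.inv c cin
  · -- a is the pending invocation: derive contradiction via the axiom
    exfalso
    have hbneff : b ≠ Event.effO c cin := by
      intro h; exact (hpend cin).2 (h ▸ hb)
    have hR : R (Event.res c cin) b := (hAx c cin cin b hbneff).mp (ha ▸ hab)
    obtain ⟨i, j, _, hi, _⟩ := hall _ _ hR hb'
    have : Event.res c cin ∈ t₁ ++ Event.inv c cin :: t₂ := List.mem_of_getElem? hi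
    rcases List.mem_append.mp this with h | h
    · exact (hpend cin).1 (List.mem_append.mpr (Or.inl h))
    · rcases List.mem_cons.mp h with h | h
      · cases h
      · exact (hpend cin).1 (List.mem_append.mpr (Or.inr h))
  · obtain ⟨i, j, hij, hi, hj⟩ := hall _ _ hab hb'
    obtain ⟨hi', hine⟩ := hget i a ha hi
    obtain ⟨hj', hjne⟩ := hget j b hbne hj
    refine ⟨_, _, ?_, hi', hj'⟩
    split <;> split <;> omega
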